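/- Let ω = (3, 3/2) and T̂_2(y) := y·(−(1 − 3y)^{-1} + 2(1 − (3/2)y)^{-1}). For any real λ < 0 and real μ > 1, define k* := (−8 + μ − √(28 + 20μ + μ²)) / (9λ(−1 + μ)). Then k* > 0 and μ = −1 − 2/T̂_2(k*λ); that is, μ lies exactly on the right real boundary point of the stability diagram D_{k*λ,2} of the 2-stage order-2 TASE-RK method. -/

import Mathlib

/-- `T̂₂(y) := y T₂(y)` for the order-2 TASE operator with parameters `ω = (3, 3/2)`. -/
noncomputable def That2 (y : ℝ) : ℝ := y * (-(1 - 3 * y)⁻¹ + 2 * (1 - (3 / 2) * y)⁻¹)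

/-- For `λ < 0` and `μ > 1`, the step
`k* := (−8 + μ − √(28 + 20μ + μ²)) / (9λ(−1 + μ))` is positive and `μ = −1 − 2/T̂₂(k*λ)`,
i.e. `μ` is exactly the right real boundary point of the stability diagram `D_{k*λ,2}`. -/
theorem kstar_pos_and_boundary (lam : ℝ) (hlam : lam < 0) (μ : ℝ) (hμ : 1 < μ) :
    0 < (-8 + μ - Real.sqrt (28 + 20 * μ + μ ^ 2)) / (9 * lam * (-1 + μ)) ∧
    μ = -1 - 2 / That2
        (((-8 + μ - Real.sqrt (28 + 20 * μ + μ ^ 2)) / (9 * lam * (-1 + μ))) * lam) := by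
  set s := Real.sqrt (28 + 20 * μ + μ ^ 2) with hsdef
  have hspos : (0:ℝ) < 28 + 20 * μ + μ ^ 2 := by nlinarith
  have hs2 : s ^ 2 = 28 + 20 * μ + μ ^ 2 := Real.sq_sqrt hspos.le
  have hsnn : 0 ≤ s := Real.sqrt_nonneg _
  have hnum : -8 + μ - s < 0 := by nlinarith
  have hden : 9 * lam * (-1 + μ) < 0 := by nlinarith
  have hkpos : 0 < (-8 + μ - s) / (9 * lam * (-1 + μ)) :=
    div_pos_of_neg_of_neg hnum hden
  refine ⟨hkpos, ?_⟩
  have hlne : lam ≠ 0 := hlam.ne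
  have hμ1 : (-1 + μ) ≠ 0 := by nlinarith
  have hy : ((-8 + μ - s) / (9 * lam * (-1 + μ))) * lam
      = (-8 + μ - s) / (9 * (-1 + μ)) := by
    field_simp
  rw [hy]
  set y := (-8 + μ - s) / (9 * (-1 + μ)) with hydef
  have hyneg : y < 0 := div_neg_of_neg_of_pos hnum (by nlinarith)
  have h1 : (1 - 3 * y) ≠ 0 := by nlinarith
  have h2 : (1 - 3 / 2 * y) ≠ 0 := by nlinarith
  have hyq : 9 * (1 - μ) * y ^ 2 + 2 * (μ - 8) * y + 4 = 0 := by
    rw [hydef]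
    field_simp
    nlinarith [hs2]
  have hμ2 : (1 + μ) ≠ 0 := by nlinarith
  have h2' : (2 - 3 * y) ≠ 0 := by nlinarith
  have hTval : That2 y = -2 / (1 + μ) := by
    unfold That2
    have h1' : (1 - y * 3) ≠ 0 := by contrapose! h1; linarith
    have h2x : (2 - y * 3) ≠ 0 := by contrapose! h2'; linarith
    field_simp [h2x, h1']
    nlinarith [hyq]
  rw [hTval]
  field_simp
  ring
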